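/- Under conditional independence of Y and S given X, positivity, and square-integrability, the function g minimizing the target-population MSE E[(Y − g(X))² | S=0] over all measurable g is g(x) = E[Y | X = x, S=1] (restricted to the target support); i.e., the source-population regression function is MSE-optimal for the target population. -/

import Mathlib

open MeasureTheory ProbabilityTheory

/-- Two functions in `L²` have integrable product. -/
lemma aux_integrable_mul {α : Type*} [MeasurableSpace α] {μ : Measure α} {f g : α → ℝ}
    (hf : MemLp f 2 μ) (hg : MemLp g 2 μ) : Integrable (fun a => f a * g a) μ := by
  have h1 := hf.integrable_sq
  have h2 := hg.integrable_sq
  refine ((h1.add h2).const_mul (1/2)).mono' (hf.1.mul hg.1) ?_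
  filter_upwards with a
  rw [Real.norm_eq_abs, abs_mul]
  simp only [Pi.add_apply]
  nlinarith [sq_nonneg (|f a| - |g a|), sq_abs (f a), sq_abs (g a), abs_nonneg (f a),
    abs_nonneg (g a)]

/-- The σ-algebra generated by `X`. -/
def auxComap {Ω : Type*} {d : ℕ} (X : Ω → (Fin d → ℝ)) : MeasurableSpace Ω :=
  MeasurableSpace.comap X MeasurableSpace.pi

set_option maxHeartbeats 1000000 in
/-- Under conditional independence of `Y` and `S` given `X`, positivity, and
square-integrability, the function minimizing the target-population MSE
`E[(Y − g(X))² | S=0]` over all measurable `g` with `E[g(X)² | S=0] < ∞` is the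
source-population regression function `r(x) = E[Y | X = x, S=1]`, and the minimizer is
a.s. unique under the target law of `X`. -/
theorem stmt_13 {Ω : Type*} [MeasurableSpace Ω] {d : ℕ}
    (μ : Measure Ω) [IsProbabilityMeasure μ]
    (Y : Ω → ℝ) (X : Ω → (Fin d → ℝ)) (S : Ω → Bool)
    (hY : Measurable Y) (hX : Measurable X) (hS : Measurable S)
    (hs1 : μ {ω | S ω = true} ≠ 0) (hs0 : μ {ω | S ω = false} ≠ 0)
    (hY2int : Integrable (fun ω => (Y ω) ^ 2) μ)
    (hpos : ∀ᵐ x ∂((μ[|{ω | S ω = false}]).map X),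
      0 < condDistrib S X μ x {true})
    (hcondDist : ∀ᵐ x ∂((μ[|{ω | S ω = false}]).map X),
      condDistrib Y X (μ[|{ω | S ω = true}]) x
        = condDistrib Y X (μ[|{ω | S ω = false}]) x) :
    ∀ g : (Fin d → ℝ) → ℝ, Measurable g →
      Integrable (fun ω => (g (X ω)) ^ 2) (μ[|{ω | S ω = false}]) →
      ((∫ ω, (Y ω - (fun x => ∫ y, y ∂(condDistrib Y X (μ[|{ω | S ω = true}]) x))
              (X ω)) ^ 2 ∂(μ[|{ω | S ω = false}]))
          ≤ ∫ ω, (Y ω - g (X ω)) ^ 2 ∂(μ[|{ω | S ω = false}]))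
      ∧ ((∫ ω, (Y ω - (fun x => ∫ y, y ∂(condDistrib Y X (μ[|{ω | S ω = true}]) x))
              (X ω)) ^ 2 ∂(μ[|{ω | S ω = false}]))
            = (∫ ω, (Y ω - g (X ω)) ^ 2 ∂(μ[|{ω | S ω = false}]))
          → ∀ᵐ x ∂((μ[|{ω | S ω = false}]).map X),
              g x = ∫ y, y ∂(condDistrib Y X (μ[|{ω | S ω = true}]) x)) := by
  intro g hg hgint
  set ν : Measure Ω := μ[|{ω | S ω = false}] with hνdef
  haveI hνP : IsProbabilityMeasure ν := cond_isProbabilityMeasure hs0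
  set κ : Kernel (Fin d → ℝ) ℝ := condDistrib Y X ν with hκdef
  set κ1 : Kernel (Fin d → ℝ) ℝ := condDistrib Y X (μ[|{ω | S ω = true}]) with hκ1def
  set r : (Fin d → ℝ) → ℝ := fun x => ∫ y, y ∂(κ x) with hrdef
  set r1 : (Fin d → ℝ) → ℝ := fun x => ∫ y, y ∂(κ1 x) with hr1def
  -- measurability of the regression functions
  have hr_meas : Measurable r := by
    have : StronglyMeasurable fun x => ∫ y, (fun p : (Fin d → ℝ) × ℝ => p.2) (x, y) ∂(κ x) :=
      (measurable_snd.stronglyMeasurable).integral_kernel_prod_right' (κ := κ)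
    exact this.measurable
  have hXae : AEMeasurable X ν := hX.aemeasurable
  -- L² facts
  have hY2μ : MemLp Y 2 μ := (memLp_two_iff_integrable_sq hY.aestronglyMeasurable).mpr hY2int
  have hY2ν : MemLp Y 2 ν := by
    rw [hνdef, ProbabilityTheory.cond]
    exact (hY2μ.restrict _).smul_measure (ENNReal.inv_ne_top.mpr hs0)
  have hYint : Integrable Y ν := hY2ν.integrable one_le_two
  -- integrability of the squared second coordinate under the joint law
  have hYX2 : Integrable (fun p : (Fin d → ℝ) × ℝ => p.2 ^ 2) (ν.map fun a => (X a, Y a)) := by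
    rw [integrable_map_measure ((measurable_snd.pow_const 2).aestronglyMeasurable)
      (hX.aemeasurable.prodMk hY.aemeasurable)]
    exact hY2ν.integrable_sq
  have hint_sq_ae : ∀ᵐ x ∂ν.map X, Integrable (fun y => y ^ 2) (κ x) :=
    hYX2.condDistrib_ae_map hY.aemeasurable
  -- Jensen: r(x)² ≤ ∫ y² dκ(x)
  have hjensen_map : ∀ᵐ x ∂ν.map X, (r x) ^ 2 ≤ ∫ y, y ^ 2 ∂(κ x) := by
    filter_upwards [hint_sq_ae] with x hx
    have hmem : MemLp (id : ℝ → ℝ) 2 (κ x) :=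
      (memLp_two_iff_integrable_sq aestronglyMeasurable_id).mpr (by simpa using hx)
    have hv := variance_nonneg (id : ℝ → ℝ) (κ x)
    rw [variance_eq_sub hmem] at hv
    have h1 : (κ x)[(id : ℝ → ℝ) ^ 2] = ∫ y, y ^ 2 ∂(κ x) := by
      simp [Pi.pow_apply]
    have h2 : (κ x)[(id : ℝ → ℝ)] = r x := by simp [hrdef]
    rw [h1, h2] at hv
    linarith
  have hjensen : ∀ᵐ a ∂ν, (r (X a)) ^ 2 ≤ ∫ y, y ^ 2 ∂(κ (X a)) :=
    ae_of_ae_map (p := fun x => (r x) ^ 2 ≤ ∫ y, y ^ 2 ∂(κ x)) hXae hjensen_map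
  have h_int_bound : Integrable (fun a => ∫ y, (y : ℝ) ^ 2 ∂(κ (X a))) ν :=
    hYX2.integral_condDistrib hX.aemeasurable hY.aemeasurable
  have hrX_sq_int : Integrable (fun a => (r (X a)) ^ 2) ν := by
    refine h_int_bound.mono' (((hr_meas.comp hX).pow_const 2).aestronglyMeasurable) ?_
    filter_upwards [hjensen] with a ha
    rw [Real.norm_eq_abs, abs_of_nonneg (sq_nonneg _)]
    exact ha
  have hr2 : MemLp (fun a => r (X a)) 2 ν :=
    (memLp_two_iff_integrable_sq (hr_meas.comp hX).aestronglyMeasurable).mpr hrX_sq_int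
  have hrint : Integrable (fun a => r (X a)) ν := hr2.integrable one_le_two
  have hg2 : MemLp (fun a => g (X a)) 2 ν :=
    (memLp_two_iff_integrable_sq (hg.comp hX).aestronglyMeasurable).mpr hgint
  -- conditional expectation
  have hm : auxComap X ≤ ‹MeasurableSpace Ω› := hX.comap_le
  have hXm : Measurable[auxComap X] X := fun s hs => ⟨s, hs, rfl⟩
  have hce : ν[Y|auxComap X] =ᵐ[ν] fun a => r (X a) :=
    condExp_ae_eq_integral_condDistrib' hX hYint
  -- the error and difference functions
  set ef : Ω → ℝ := fun a => Y a - r (X a) with hefdef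
  set hf : Ω → ℝ := fun a => r (X a) - g (X a) with hhfdef
  have he2 : MemLp ef 2 ν := hY2ν.sub hr2
  have hh2 : MemLp hf 2 ν := hr2.sub hg2
  have he_int : Integrable ef ν := he2.integrable one_le_two
  have heh_int : Integrable (fun a => hf a * ef a) ν := aux_integrable_mul hh2 he2
  have hh_sm : StronglyMeasurable[auxComap X] hf :=
    ((hr_meas.comp hXm).sub (hg.comp hXm)).stronglyMeasurable
  -- conditional expectation of the error is zero
  have h_rsm : StronglyMeasurable[auxComap X] (fun a => r (X a)) :=
    (show Measurable[auxComap X] fun a => r (X a) from hr_meas.comp hXm).stronglyMeasurable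
  have h_ce_e : ν[ef|auxComap X] =ᵐ[ν] 0 := by
    have h1 : ν[ef|auxComap X] =ᵐ[ν] ν[Y|auxComap X] - ν[fun a => r (X a)|auxComap X] :=
      condExp_sub hYint hrint _
    have h2 : ν[fun a => r (X a)|auxComap X] = fun a => r (X a) :=
      condExp_of_stronglyMeasurable hm h_rsm hrint
    filter_upwards [h1, hce] with a ha1 ha3
    simp only [Pi.sub_apply, Pi.zero_apply] at *
    rw [ha1, h2, ha3]
    ring
  -- cross term vanishes
  have hcross : ∫ a, hf a * ef a ∂ν = 0 := by
    have hpull : ν[hf * ef|auxComap X] =ᵐ[ν] hf * ν[ef|auxComap X] :=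
      condExp_mul_of_stronglyMeasurable_left hh_sm (by simpa [Pi.mul_def] using heh_int) he_int
    have hzero : ν[hf * ef|auxComap X] =ᵐ[ν] 0 := by
      filter_upwards [hpull, h_ce_e] with a h1 h2
      simp only [Pi.mul_apply, Pi.zero_apply] at *
      rw [h1, h2, mul_zero]
    calc ∫ a, hf a * ef a ∂ν = ∫ a, (ν[hf * ef|auxComap X]) a ∂ν := by
          rw [integral_condExp hm]; rfl
      _ = ∫ a, (0 : Ω → ℝ) a ∂ν := integral_congr_ae hzero
      _ = 0 := by simp
  -- decomposition of the MSE
  have hdecomp : ∫ a, (Y a - g (X a)) ^ 2 ∂ν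
      = ∫ a, ef a ^ 2 ∂ν + ∫ a, hf a ^ 2 ∂ν := by
    have hpt : ∀ a, (Y a - g (X a)) ^ 2 = ef a ^ 2 + (2 * (hf a * ef a) + hf a ^ 2) := by
      intro a; simp only [hefdef, hhfdef]; ring
    calc ∫ a, (Y a - g (X a)) ^ 2 ∂ν
        = ∫ a, (ef a ^ 2 + (2 * (hf a * ef a) + hf a ^ 2)) ∂ν :=
          integral_congr_ae (Filter.Eventually.of_forall hpt)
      _ = ∫ a, ef a ^ 2 ∂ν + ∫ a, (2 * (hf a * ef a) + hf a ^ 2) ∂ν :=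
          integral_add he2.integrable_sq ((heh_int.const_mul 2).add hh2.integrable_sq)
      _ = ∫ a, ef a ^ 2 ∂ν + (2 * ∫ a, hf a * ef a ∂ν + ∫ a, hf a ^ 2 ∂ν) := by
          rw [integral_add (heh_int.const_mul 2) hh2.integrable_sq, integral_const_mul]
      _ = ∫ a, ef a ^ 2 ∂ν + ∫ a, hf a ^ 2 ∂ν := by rw [hcross]; ring
  -- equality of the two regression functions ν-a.e.
  have hrr1_map : ∀ᵐ x ∂ν.map X, r1 x = r x := by
    filter_upwards [hcondDist] with x hx
    rw [hr1def, hrdef]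
    simp only [hx]
  have hrr1 : ∀ᵐ a ∂ν, r1 (X a) = r (X a) := ae_of_ae_map (p := fun x => r1 x = r x) hXae hrr1_map
  have hLHS : ∫ a, (Y a - r1 (X a)) ^ 2 ∂ν = ∫ a, ef a ^ 2 ∂ν := by
    refine integral_congr_ae ?_
    filter_upwards [hrr1] with a ha
    rw [hefdef]; simp only [ha]
  have hnn : 0 ≤ ∫ a, hf a ^ 2 ∂ν := integral_nonneg fun a => sq_nonneg _
  constructor
  · show (∫ a, (Y a - r1 (X a)) ^ 2 ∂ν) ≤ ∫ a, (Y a - g (X a)) ^ 2 ∂ν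
    rw [hLHS, hdecomp]
    linarith
  · intro heq
    have heq' : ∫ a, ef a ^ 2 ∂ν = ∫ a, ef a ^ 2 ∂ν + ∫ a, hf a ^ 2 ∂ν := by
      have h' : (∫ a, (Y a - r1 (X a)) ^ 2 ∂ν) = ∫ a, (Y a - g (X a)) ^ 2 ∂ν := heq
      rw [hLHS] at h'
      exact h'.trans hdecomp
    have hzero : ∫ a, hf a ^ 2 ∂ν = 0 := by linarith
    have hh0 : (fun a => hf a ^ 2) =ᵐ[ν] 0 :=
      (integral_eq_zero_iff_of_nonneg (fun a => sq_nonneg _) hh2.integrable_sq).mp hzero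
    have hgr : ∀ᵐ a ∂ν, g (X a) = r (X a) := by
      filter_upwards [hh0] with a ha
      have : hf a = 0 := by simpa using ha
      rw [hhfdef] at this
      simp only at this
      linarith
    have hset : MeasurableSet {x | g x = r x} := measurableSet_eq_fun hg hr_meas
    have hmapeq : ∀ᵐ x ∂ν.map X, g x = r x := (MeasureTheory.ae_map_iff (p := fun x => g x = r x) hXae hset).mpr hgr
    filter_upwards [hmapeq, hrr1_map] with x h1 h2
    show g x = r1 x
    rw [h2, h1]
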